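/- arXiv:0905.0609 — 2 statements merged into one kernel-verified Lean document; each statement's English description precedes it below -/
import Mathlib

section
/- For every N ≥ 1, the coefficient identity (-1)^{N} · binom(b_0+1, N) + ∑_{m=0}^{N-1} f(m) · (-1)^{N-1-m} · binom(b_{m+1}+1, N-1-m) = 0 holds; equivalently the two-variable generating function identity (1-x-t)·C(x,t) = 1 - t^{1+b_0} - ∑_{m>0} f(m-1) x^m t^{1+b_m} holds coefficientwise. -/
/-- The number of nondecreasing sequences `0 ≤ a 0 ≤ ⋯ ≤ a n` below the barrier `b`. -/
noncomputable def barrierSeqCount (b : ℕ → ℕ) (n : ℕ) : ℕ :=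
  Nat.card {a : Fin (n + 1) → ℕ // Monotone a ∧ ∀ i, a i ≤ b i.1}

/-- The number of nondecreasing sequences `0 ≤ a 0 ≤ ⋯ ≤ a m` below the barrier `b`
with last term exactly `j`. -/
noncomputable def barrierCount (b : ℕ → ℕ) (m j : ℕ) : ℕ :=
  Nat.card {a : Fin (m + 1) → ℕ // Monotone a ∧ (∀ i, a i ≤ b i.1) ∧ a (Fin.last m) = j}

noncomputable def barrierCum (b : ℕ → ℕ) (m j : ℕ) : ℕ :=
  Nat.card {a : Fin (m + 1) → ℕ // Monotone a ∧ (∀ i, a i ≤ b i.1) ∧ a (Fin.last m) ≤ j}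

lemma finite_aux (b : ℕ → ℕ) (m : ℕ) {p : (Fin (m+1) → ℕ) → Prop}
    (hp : ∀ a, p a → ∀ i, a i ≤ b i.1) : Finite {a : Fin (m+1) → ℕ // p a} := by
  apply Finite.of_injective
    (fun x => (fun i => (⟨x.1 i, Nat.lt_succ_of_le (hp x.1 x.2 i)⟩ : Fin (b i.1 + 1))))
  intro x y h
  apply Subtype.ext
  funext i
  exact congrArg Fin.val (congrFun h i)

instance (b : ℕ → ℕ) (n : ℕ) : Finite {a : Fin (n + 1) → ℕ // Monotone a ∧ ∀ i, a i ≤ b i.1} :=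
  finite_aux b n (fun a ha => ha.2)

instance (b : ℕ → ℕ) (m j : ℕ) :
    Finite {a : Fin (m + 1) → ℕ // Monotone a ∧ (∀ i, a i ≤ b i.1) ∧ a (Fin.last m) = j} :=
  finite_aux b m (fun a ha => ha.2.1)

instance (b : ℕ → ℕ) (m j : ℕ) :
    Finite {a : Fin (m + 1) → ℕ // Monotone a ∧ (∀ i, a i ≤ b i.1) ∧ a (Fin.last m) ≤ j} :=
  finite_aux b m (fun a ha => ha.2.1)

lemma barrierCount_eq_zero (b : ℕ → ℕ) {m j : ℕ} (h : b m < j) : barrierCount b m j = 0 := by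
  rw [barrierCount, Nat.card_eq_zero]
  left
  constructor
  rintro ⟨a, -, h2, h3⟩
  have := h2 (Fin.last m)
  rw [h3] at this
  simp only [Fin.val_last] at this
  omega

lemma barrierCum_succ (b : ℕ → ℕ) (m j : ℕ) :
    barrierCum b m (j+1) = barrierCum b m j + barrierCount b m (j+1) := by
  rw [barrierCum, barrierCum, barrierCount, ← Nat.card_sum]
  apply Nat.card_congr
  refine
    { toFun := fun x => if h : x.1 (Fin.last m) = j + 1
        then Sum.inr ⟨x.1, x.2.1, x.2.2.1, h⟩
        else Sum.inl ⟨x.1, x.2.1, x.2.2.1, by have := x.2.2.2; omega⟩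
      invFun := Sum.elim (fun y => ⟨y.1, y.2.1, y.2.2.1, by have := y.2.2.2; omega⟩)
        (fun y => ⟨y.1, y.2.1, y.2.2.1, le_of_eq y.2.2.2⟩)
      left_inv := ?_, right_inv := ?_ }
  · intro x; by_cases h : x.1 (Fin.last m) = j + 1 <;> simp [h]
  · rintro (y | y)
    · have : ¬ y.1 (Fin.last m) = j + 1 := by have := y.2.2.2; omega
      simp [this]
    · simp [y.2.2.2]

lemma barrierCum_zero (b : ℕ → ℕ) (m : ℕ) : barrierCum b m 0 = barrierCount b m 0 := by
  rw [barrierCum, barrierCount]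
  apply Nat.card_congr
  exact Equiv.subtypeEquivRight (fun a => by simp [Nat.le_zero])

lemma barrierCum_eq_seqCount (b : ℕ → ℕ) (hb : Monotone b) {m j : ℕ} (h : b m ≤ j) :
    barrierCum b m j = barrierSeqCount b m := by
  rw [barrierCum, barrierSeqCount]
  apply Nat.card_congr
  apply Equiv.subtypeEquivRight
  intro a
  constructor
  · rintro ⟨h1, h2, -⟩; exact ⟨h1, h2⟩
  · rintro ⟨h1, h2⟩
    exact ⟨h1, h2, le_trans (by simpa using h2 (Fin.last m)) h⟩

lemma monotone_snoc {m : ℕ} {a : Fin (m+1) → ℕ} (ha : Monotone a) {j : ℕ}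
    (hj : a (Fin.last m) ≤ j) : Monotone (Fin.snoc a j : Fin (m+2) → ℕ) := by
  intro i k hik
  induction k using Fin.lastCases with
  | last =>
    rw [Fin.snoc_last]
    induction i using Fin.lastCases with
    | last => rw [Fin.snoc_last]
    | cast i => rw [Fin.snoc_castSucc]; exact le_trans (ha (Fin.le_last i)) hj
  | cast k =>
    induction i using Fin.lastCases with
    | last => exact absurd hik (not_le.mpr (Fin.castSucc_lt_last k))
    | cast i =>
      rw [Fin.snoc_castSucc, Fin.snoc_castSucc]
      exact ha (by simpa using hik)

lemma barrierCount_succ_eq_cum (b : ℕ → ℕ) {m j : ℕ} (hj : j ≤ b (m+1)) :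
    barrierCount b (m+1) j = barrierCum b m j := by
  rw [barrierCount, barrierCum]
  apply Nat.card_congr
  refine
    { toFun := fun x => ⟨Fin.init x.1,
        fun p q hpq => x.2.1 (by simpa [Fin.castSucc_le_castSucc_iff] using hpq),
        fun i => by simpa [Fin.init] using x.2.2.1 i.castSucc,
        le_trans (x.2.1 (Fin.le_last (Fin.last m).castSucc)) (le_of_eq x.2.2.2)⟩
      invFun := fun y => ⟨Fin.snoc y.1 j, monotone_snoc y.2.1 y.2.2.2, ?_, by
        simp [Fin.snoc_last]⟩
      left_inv := ?_, right_inv := ?_ }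
  · intro i
    induction i using Fin.lastCases with
    | last => simpa [Fin.snoc_last] using hj
    | cast i => rw [Fin.snoc_castSucc]; simpa using y.2.2.1 i
  · intro x
    apply Subtype.ext
    exact (congrArg (Fin.snoc (Fin.init x.1)) x.2.2.2.symm).trans (Fin.snoc_init_self x.1)
  · intro y
    apply Subtype.ext
    dsimp only
    rw [Fin.init_snoc]

lemma barrierCount_zero_of_le (b : ℕ → ℕ) {j : ℕ} (h : j ≤ b 0) : barrierCount b 0 j = 1 := by
  rw [barrierCount]
  have : Nonempty {a : Fin 1 → ℕ // Monotone a ∧ (∀ i, a i ≤ b i.1) ∧ a (Fin.last 0) = j} :=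
    ⟨⟨fun _ => j, monotone_const, fun i => by
      have : i = 0 := Subsingleton.elim _ _
      rw [this]; simpa using h, rfl⟩⟩
  have : Subsingleton {a : Fin 1 → ℕ // Monotone a ∧ (∀ i, a i ≤ b i.1) ∧ a (Fin.last 0) = j} := by
    constructor
    rintro ⟨x, -, -, hx⟩ ⟨y, -, -, hy⟩
    apply Subtype.ext
    funext i
    have hi : i = Fin.last 0 := Subsingleton.elim _ _
    rw [hi]
    dsimp only at hx hy ⊢
    rw [hx, hy]
  exact Nat.card_unique

lemma rec2 (b : ℕ → ℕ) (hb : Monotone b) (m j : ℕ) :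
    (barrierCount b m j : ℤ) - (if m = 0 then 0 else (barrierCount b (m - 1) j : ℤ)) -
        (if j = 0 then 0 else (barrierCount b m (j - 1) : ℤ)) =
      (if m = 0 ∧ j = 0 then 1 else 0) - (if m = 0 ∧ j = b 0 + 1 then 1 else 0) -
        (if 0 < m ∧ j = b m + 1 then (barrierSeqCount b (m - 1) : ℤ) else 0) := by
  rcases m with - | m
  · simp only [if_pos rfl, Nat.lt_irrefl, false_and, if_false, true_and, Nat.zero_eq]
    rcases j with - | j
    · rw [barrierCount_zero_of_le b (Nat.zero_le _)]
      have : ¬ (0 = b 0 + 1) := by omega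
      simp [this]
    · have h0 : ¬ (j + 1 = 0) := by omega
      simp only [h0, if_false, Nat.add_sub_cancel]
      rcases Nat.lt_trichotomy (j+1) (b 0 + 1) with h | h | h
      · rw [barrierCount_zero_of_le b (by omega : j + 1 ≤ b 0),
          barrierCount_zero_of_le b (by omega : j ≤ b 0)]
        have : ¬ (j + 1 = b 0 + 1) := by omega
        simp [this]; omega
      · rw [barrierCount_eq_zero b (by omega : b 0 < j + 1),
          barrierCount_zero_of_le b (by omega : j ≤ b 0)]
        simp [h]
      · rw [barrierCount_eq_zero b (by omega : b 0 < j + 1),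
          barrierCount_eq_zero b (by omega : b 0 < j)]
        have : ¬ (j + 1 = b 0 + 1) := by omega
        simp [this]; omega
  · have hms : ¬ (m + 1 = 0) := by omega
    simp only [hms, if_false, Nat.add_sub_cancel, Nat.zero_lt_succ, true_and, false_and,
      if_false]
    rcases j with - | j
    · have : ¬ (0 = b (m+1) + 1) := by omega
      simp only [Nat.zero_lt_succ, this, if_false, if_pos rfl]
      rw [barrierCount_succ_eq_cum b (Nat.zero_le _), barrierCum_zero]
      simp
    · have h0 : ¬ (j + 1 = 0) := by omega
      simp only [h0, if_false, Nat.add_sub_cancel]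
      rcases Nat.lt_trichotomy (j+1) (b (m+1) + 1) with h | h | h
      · rw [barrierCount_succ_eq_cum b (by omega : j + 1 ≤ b (m+1)),
          barrierCount_succ_eq_cum b (by omega : j ≤ b (m+1)), barrierCum_succ]
        have : ¬ (j + 1 = b (m+1) + 1) := by omega
        rw [if_neg this]
        push_cast
        ring
      · have hj : j = b (m+1) := by omega
        rw [barrierCount_eq_zero b (by omega : b (m+1) < j + 1),
          barrierCount_eq_zero b (by have : b m ≤ b (m+1) := hb (Nat.le_succ m); omega : b m < j + 1),
          barrierCount_succ_eq_cum b (by omega : j ≤ b (m+1)),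
          barrierCum_eq_seqCount b hb (by have : b m ≤ b (m+1) := hb (Nat.le_succ m); omega : b m ≤ j),
          if_pos h]
        ring
      · rw [barrierCount_eq_zero b (by omega : b (m+1) < j + 1),
          barrierCount_eq_zero b (by have : b m ≤ b (m+1) := hb (Nat.le_succ m); omega : b m < j + 1),
          barrierCount_eq_zero b (by omega : b (m+1) < j)]
        have : ¬ (j + 1 = b (m+1) + 1) := by omega
        simp [this]; intro; omega

open Finset in
lemma hockey (n k : ℕ) : ∑ j ∈ Finset.range n, j.choose k = n.choose (k+1) := by
  induction n with
  | zero => simp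
  | succ n ih => rw [Finset.sum_range_succ, ih, Nat.choose_succ_succ]; ring

noncomputable def Ubc (b : ℕ → ℕ) (m k : ℕ) : ℤ :=
  ∑ j ∈ Finset.range (b m + 1), (barrierCount b m j : ℤ) * ((j.choose k : ℕ) : ℤ)

lemma sum_ext (b : ℕ → ℕ) (m : ℕ) (g : ℕ → ℤ) {n : ℕ} (hn : b m + 1 ≤ n) :
    ∑ j ∈ Finset.range n, (barrierCount b m j : ℤ) * g j
      = ∑ j ∈ Finset.range (b m + 1), (barrierCount b m j : ℤ) * g j := by
  apply (Finset.sum_subset (by simp; omega : Finset.range (b m + 1) ⊆ Finset.range n) _).symm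
  intro x hx hx'
  simp only [Finset.mem_range] at hx hx'
  rw [barrierCount_eq_zero b (by omega), Nat.cast_zero, zero_mul]

lemma barrierCum_eq_sum (b : ℕ → ℕ) (m j : ℕ) :
    barrierCum b m j = ∑ i ∈ Finset.range (j+1), barrierCount b m i := by
  induction j with
  | zero => simpa using barrierCum_zero b m
  | succ j ih => rw [Finset.sum_range_succ, ← ih, barrierCum_succ]

lemma Ubc_zero_right (b : ℕ → ℕ) (hb : Monotone b) (m : ℕ) :
    Ubc b m 0 = (barrierSeqCount b m : ℤ) := by
  rw [Ubc, ← barrierCum_eq_seqCount b hb (le_refl (b m)), barrierCum_eq_sum]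
  push_cast
  simp

lemma Ubc_zero_left (b : ℕ → ℕ) (k : ℕ) :
    Ubc b 0 k = (((b 0 + 1).choose (k+1) : ℕ) : ℤ) := by
  rw [Ubc, ← hockey (b 0 + 1) k]
  push_cast
  apply Finset.sum_congr rfl
  intro j hj
  simp only [Finset.mem_range] at hj
  rw [barrierCount_zero_of_le b (by omega)]
  push_cast
  ring

lemma rec2' (b : ℕ → ℕ) (hb : Monotone b) (m j : ℕ) :
    (barrierCount b (m+1) j : ℤ) = (barrierCount b m j : ℤ)
      + (if j = 0 then 0 else (barrierCount b (m+1) (j - 1) : ℤ))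
      - (if j = b (m+1) + 1 then (barrierSeqCount b m : ℤ) else 0) := by
  have h := rec2 b hb (m+1) j
  have hms : ¬ (m + 1 = 0) := by omega
  simp only [hms, if_false, Nat.add_sub_cancel, Nat.zero_lt_succ, true_and, false_and,
    if_false] at h
  linarith

lemma key (b : ℕ → ℕ) (hb : Monotone b) (m k : ℕ) :
    Ubc b m (k+1) + Ubc b (m+1) k
      = (barrierSeqCount b m : ℤ) * (((b (m+1) + 1).choose (k+1) : ℕ) : ℤ) := by
  have hBm : b m + 1 ≤ b (m+1) + 2 := by
    have : b m ≤ b (m+1) := hb (Nat.le_succ m)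
    omega
  have expand :
      ∑ j ∈ Finset.range (b (m+1) + 2), (barrierCount b (m+1) j : ℤ) * ((j.choose (k+1) : ℕ) : ℤ)
        = ∑ j ∈ Finset.range (b (m+1) + 2), ((barrierCount b m j : ℤ)
            + (if j = 0 then 0 else (barrierCount b (m+1) (j - 1) : ℤ))
            - (if j = b (m+1) + 1 then (barrierSeqCount b m : ℤ) else 0))
              * ((j.choose (k+1) : ℕ) : ℤ) :=
    Finset.sum_congr rfl (fun j _ => by rw [← rec2' b hb m j])
  rw [sum_ext b (m+1) _ (by omega)] at expand
  have e1 : ∑ j ∈ Finset.range (b (m+1) + 2), ((barrierCount b m j : ℤ)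
            + (if j = 0 then 0 else (barrierCount b (m+1) (j - 1) : ℤ))
            - (if j = b (m+1) + 1 then (barrierSeqCount b m : ℤ) else 0))
              * ((j.choose (k+1) : ℕ) : ℤ)
      = ∑ j ∈ Finset.range (b (m+1) + 2), (barrierCount b m j : ℤ) * ((j.choose (k+1) : ℕ) : ℤ)
      + ∑ j ∈ Finset.range (b (m+1) + 2),
          (if j = 0 then 0 else (barrierCount b (m+1) (j - 1) : ℤ)) * ((j.choose (k+1) : ℕ) : ℤ)
      - ∑ j ∈ Finset.range (b (m+1) + 2),
          (if j = b (m+1) + 1 then (barrierSeqCount b m : ℤ) else 0) * ((j.choose (k+1) : ℕ) : ℤ) := by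
    simp only [sub_mul, add_mul, Finset.sum_sub_distrib, Finset.sum_add_distrib]
  have e2 : ∑ j ∈ Finset.range (b (m+1) + 2), (barrierCount b m j : ℤ) * ((j.choose (k+1) : ℕ) : ℤ)
      = Ubc b m (k+1) := sum_ext b m _ (by omega)
  have e3 : ∑ j ∈ Finset.range (b (m+1) + 2),
        (if j = 0 then 0 else (barrierCount b (m+1) (j - 1) : ℤ)) * ((j.choose (k+1) : ℕ) : ℤ)
      = Ubc b (m+1) k + Ubc b (m+1) (k+1) := by
    rw [Finset.sum_range_succ']
    simp only [if_pos rfl, zero_mul, add_zero, Nat.add_sub_cancel]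
    have : ∀ i, ¬ (i + 1 = 0) := fun i => by omega
    simp only [this, if_false]
    have step : ∀ i, (barrierCount b (m+1) i : ℤ) * (((i+1).choose (k+1) : ℕ) : ℤ)
        = (barrierCount b (m+1) i : ℤ) * ((i.choose k : ℕ) : ℤ)
          + (barrierCount b (m+1) i : ℤ) * ((i.choose (k+1) : ℕ) : ℤ) := by
      intro i
      rw [Nat.choose_succ_succ]
      push_cast
      ring
    rw [Finset.sum_congr rfl (fun i _ => step i), Finset.sum_add_distrib, Ubc, Ubc]
    simp
  have e4 : ∑ j ∈ Finset.range (b (m+1) + 2),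
        (if j = b (m+1) + 1 then (barrierSeqCount b m : ℤ) else 0) * ((j.choose (k+1) : ℕ) : ℤ)
      = (barrierSeqCount b m : ℤ) * (((b (m+1) + 1).choose (k+1) : ℕ) : ℤ) := by
    rw [Finset.sum_congr rfl (fun j _ => by rw [ite_mul, zero_mul]), Finset.sum_ite_eq']
    simp
  rw [e1, e2, e3, e4] at expand
  have e0 : Ubc b (m+1) (k+1) = ∑ j ∈ Finset.range (b (m+1) + 1),
      (barrierCount b (m+1) j : ℤ) * ((j.choose (k+1) : ℕ) : ℤ) := rfl
  rw [← e0] at expand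
  linarith

lemma part1' (b : ℕ → ℕ) (hb : Monotone b) (n : ℕ) :
    (barrierSeqCount b n : ℤ) = (-1)^n * (((b 0 + 1).choose (n+1) : ℕ) : ℤ)
      + ∑ m ∈ Finset.range n,
          (-1)^(n - m - 1) * (barrierSeqCount b m : ℤ) * (((b (m+1) + 1).choose (n - m) : ℕ) : ℤ) := by
  have tel := Finset.sum_range_sub (fun m => (-1 : ℤ)^(n - m) * Ubc b m (n - m)) n
  have hend : (-1 : ℤ)^(n - n) * Ubc b n (n - n) = (barrierSeqCount b n : ℤ) := by
    simp [Nat.sub_self, Ubc_zero_right b hb]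
  have hstart : (-1 : ℤ)^(n - 0) * Ubc b 0 (n - 0) = (-1)^n * (((b 0 + 1).choose (n+1) : ℕ) : ℤ) := by
    simp [Ubc_zero_left]
  have hterm : ∀ m ∈ Finset.range n,
      (-1 : ℤ)^(n - (m+1)) * Ubc b (m+1) (n - (m+1)) - (-1)^(n - m) * Ubc b m (n - m)
        = (-1)^(n - m - 1) * (barrierSeqCount b m : ℤ) * (((b (m+1) + 1).choose (n - m) : ℕ) : ℤ) := by
    intro m hm
    simp only [Finset.mem_range] at hm
    have h1 : n - (m+1) = n - m - 1 := by omega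
    have h2 : n - m = (n - m - 1) + 1 := by omega
    rw [h1, h2, pow_succ, ← h2]
    have hkey := key b hb m (n - m - 1)
    rw [← h2] at hkey
    calc (-1:ℤ)^(n-m-1) * Ubc b (m+1) (n-m-1) - (-1)^(n-m-1) * (-1) * Ubc b m (n-m)
        = (-1:ℤ)^(n-m-1) * (Ubc b m (n-m) + Ubc b (m+1) (n-m-1)) := by ring
      _ = _ := by rw [hkey]; ring
  rw [Finset.sum_congr rfl hterm, hend, hstart] at tel
  linarith

theorem stmt_5 (b : ℕ → ℕ) (hb : Monotone b) :
    (∀ N : ℕ, 1 ≤ N →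
        (-1 : ℤ) ^ N * ((b 0 + 1).choose N : ℤ) +
          ∑ m ∈ Finset.range N,
            (barrierSeqCount b m : ℤ) * (-1) ^ (N - 1 - m) *
              ((b (m + 1) + 1).choose (N - 1 - m) : ℤ) = 0) ∧
      ∀ m j : ℕ,
        (barrierCount b m j : ℤ) - (if m = 0 then 0 else (barrierCount b (m - 1) j : ℤ)) -
            (if j = 0 then 0 else (barrierCount b m (j - 1) : ℤ)) =
          (if m = 0 ∧ j = 0 then 1 else 0) - (if m = 0 ∧ j = b 0 + 1 then 1 else 0) -
            (if 0 < m ∧ j = b m + 1 then (barrierSeqCount b (m - 1) : ℤ) else 0) := by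
  refine ⟨?_, rec2 b hb⟩
  intro N hN
  obtain ⟨n, rfl⟩ : ∃ n, N = n + 1 := ⟨N - 1, by omega⟩
  simp only [Nat.add_sub_cancel]
  rw [Finset.sum_range_succ, Nat.sub_self, pow_zero, Nat.choose_zero_right]
  rw [part1' b hb n]
  have hpt : ∀ m ∈ Finset.range n,
      (barrierSeqCount b m : ℤ) * (-1) ^ (n - m) * ((b (m + 1) + 1).choose (n - m) : ℤ)
        = -((-1)^(n - m - 1) * (barrierSeqCount b m : ℤ) * (((b (m+1) + 1).choose (n - m) : ℕ) : ℤ)) := by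
    intro m hm
    simp only [Finset.mem_range] at hm
    have h2 : n - m = (n - m - 1) + 1 := by omega
    rw [h2, pow_succ, ← h2]
    ring
  rw [Finset.sum_congr rfl hpt, Finset.sum_neg_distrib, pow_succ]
  ring
end

section
/- For the linear barrier b_j = rj + s, the generating function F(x) = ∑_{n≥0} f(n) x^n satisfies the functional equation 1 - (1-x)^{s+1} = x (1-x)^{r+s+1} F(x(1-x)^r) in the ring of formal power series. -/
open PowerSeries Finset



lemma barrier_finite (b : ℕ → ℕ) (m : ℕ) :
    Finite {a : Fin (m + 1) → ℕ // Monotone a ∧ ∀ i, a i ≤ b i.1} := by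
  apply Finite.of_injective
    (fun a => (fun i => (⟨a.1 i, Nat.lt_succ_of_le (a.2.2 i)⟩ : Fin (b i.1 + 1))))
  intro a a' h
  ext i
  have := congrFun h i
  simpa using congrArg Fin.val this

lemma barrier_succ (b : ℕ → ℕ) (hb : Monotone b) (n : ℕ) :
    barrierSeqCount b (n + 1) =
      ∑ i ∈ Finset.range (b 0 + 1), barrierSeqCount (fun j => b (j + 1) - i) n := by
  classical
  set P : Type := {a : Fin (n + 2) → ℕ // Monotone a ∧ ∀ i, a i ≤ b i.1} with hP
  let g : P → Fin (b 0 + 1) := fun a => ⟨a.1 0, Nat.lt_succ_of_le (a.2.2 0)⟩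
  have e1 : (Σ i : Fin (b 0 + 1), {x : P // g x = i}) ≃ P := Equiv.sigmaFiberEquiv g
  have e2 : ∀ i : Fin (b 0 + 1), {x : P // g x = i} ≃
      {c : Fin (n + 1) → ℕ // Monotone c ∧ ∀ j, c j ≤ (fun j => b (j + 1) - i.1) j.1} := by
    intro i
    refine
    { toFun := fun x => ⟨fun j => x.1.1 j.succ - i.1, ?_, ?_⟩
      invFun := fun c => ⟨⟨fun k => if hk : k.1 = 0 then i.1 else c.1 ⟨k.1 - 1, by omega⟩ + i.1,
        ?_, ?_⟩, ?_⟩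
      left_inv := ?_
      right_inv := ?_ }
    · -- monotone of forward
      intro j j' hj
      show x.1.1 j.succ - i.1 ≤ x.1.1 j'.succ - i.1
      have := x.1.2.1 (show j.succ ≤ j'.succ from Fin.succ_le_succ_iff.mpr hj)
      omega
    · -- bound of forward
      intro j
      have h1 := x.1.2.2 j.succ
      have h2 : x.1.1 0 = i.1 := congrArg Fin.val x.2
      have h3 := x.1.2.1 (Fin.zero_le j.succ)
      simp only [Fin.val_succ] at h1
      show x.1.1 j.succ - i.1 ≤ b (j.1 + 1) - i.1
      omega
    · -- monotone of inverse
      intro k k' hk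
      have hk' : k.1 ≤ k'.1 := hk
      by_cases h0 : k.1 = 0
      · by_cases h0' : k'.1 = 0
        · simp [h0, h0']
        · simp [h0, h0']
      · have h0' : k'.1 ≠ 0 := by omega
        simp only [dif_neg h0, dif_neg h0']
        have := c.2.1 (show (⟨k.1 - 1, by omega⟩ : Fin (n + 1)) ≤ ⟨k'.1 - 1, by omega⟩ by
          simp [Fin.le_def]; omega)
        omega
    · -- bound of inverse
      intro k
      by_cases h0 : k.1 = 0
      · simp only [dif_pos h0, h0]
        exact Nat.lt_succ_iff.mp i.2
      · simp only [dif_neg h0]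
        have h1 := c.2.2 ⟨k.1 - 1, by omega⟩
        simp only at h1
        have h2 : k.1 - 1 + 1 = k.1 := by omega
        rw [h2] at h1
        have h3 : b 0 ≤ b k.1 := hb (Nat.zero_le _)
        have h4 : i.1 ≤ b 0 := Nat.lt_succ_iff.mp i.2
        omega
    · -- fiber condition of inverse
      apply Fin.ext
      simp [g]
    · -- left inverse
      intro x
      apply Subtype.ext
      apply Subtype.ext
      funext k
      by_cases h0 : k.1 = 0
      · have : k = 0 := Fin.ext h0
        subst this
        have h2 : x.1.1 0 = i.1 := congrArg Fin.val x.2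
        simp [h2]
      · simp only [dif_neg h0]
        have h2 : x.1.1 0 = i.1 := congrArg Fin.val x.2
        have h3 : (⟨k.1 - 1, by omega⟩ : Fin (n + 1)).succ = k := by
          apply Fin.ext; simp; omega
        rw [h3]
        have h4 := x.1.2.1 (Fin.zero_le k)
        omega
    · -- right inverse
      intro c
      apply Subtype.ext
      funext j
      have h0 : (j.succ : Fin (n + 2)).1 ≠ 0 := by simp
      simp only [dif_neg h0]
      have h3 : (⟨(j.succ : Fin (n+2)).1 - 1, by omega⟩ : Fin (n + 1)) = j := by
        apply Fin.ext; simp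
      rw [h3]
      omega
  haveI : Finite P := barrier_finite b (n + 1)
  haveI : ∀ i : Fin (b 0 + 1), Finite {x : P // g x = i} := fun i => Subtype.finite
  letI : Fintype P := Fintype.ofFinite P
  letI : ∀ i : Fin (b 0 + 1), Fintype {x : P // g x = i} := fun i => Fintype.ofFinite _
  have key : Nat.card P = ∑ i : Fin (b 0 + 1), Nat.card {x : P // g x = i} := by
    rw [← Nat.card_congr e1]
    rw [Nat.card_eq_fintype_card, Fintype.card_sigma]
    simp [Nat.card_eq_fintype_card]
  rw [barrierSeqCount, key]
  rw [← Fin.sum_univ_eq_sum_range (fun i => barrierSeqCount (fun j => b (j + 1) - i) n)]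
  apply Finset.sum_congr rfl
  intro i _
  rw [Nat.card_congr (e2 i), barrierSeqCount]



lemma barrier_zero (b : ℕ → ℕ) : barrierSeqCount b 0 = b 0 + 1 := by
  have e : {a : Fin 1 → ℕ // Monotone a ∧ ∀ i, a i ≤ b i.1} ≃ Fin (b 0 + 1) :=
  { toFun := fun a => ⟨a.1 0, Nat.lt_succ_of_le (a.2.2 0)⟩
    invFun := fun k => ⟨fun _ => k.1, monotone_const, fun i => by
      have : i = 0 := Subsingleton.elim _ _
      subst this; exact Nat.lt_succ_iff.mp k.2⟩
    left_inv := fun a => by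
      ext i
      have : i = 0 := Subsingleton.elim _ _
      subst this; rfl
    right_inv := fun k => rfl }
  rw [barrierSeqCount, Nat.card_congr e, Nat.card_eq_fintype_card, Fintype.card_fin]


lemma f_zero (r t : ℕ) : barrierSeqCount (fun j => r * j + t) 0 = t + 1 := by
  rw [barrier_zero]; simp

lemma f_succ (r t n : ℕ) :
    barrierSeqCount (fun j => r * j + t) (n + 1) =
      ∑ i ∈ Finset.range (t + 1), barrierSeqCount (fun j => r * j + (r + t - i)) n := by
  have hb : Monotone (fun j => r * j + t) := fun x y h => by
    simpa using add_le_add_right (Nat.mul_le_mul_left r h) t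
  rw [barrier_succ _ hb n]
  have h0 : (fun j => r * j + t) 0 + 1 = t + 1 := by simp
  rw [h0]
  apply Finset.sum_congr rfl
  intro i hi
  rw [Finset.mem_range] at hi
  congr 1
  funext j
  show r * (j + 1) + t - i = r * j + (r + t - i)
  have : r * (j + 1) = r * j + r := by ring
  omega




lemma coeff_A_Zn (r a : ℕ) {j n : ℕ} (hj : j ≤ n) :
    coeff (R := ℤ) j ((X * (1 - X) ^ a) * (X * (1 - X) ^ r) ^ n) = 0 := by
  have hdvd : (X : ℤ⟦X⟧) ^ (n + 1) ∣ (X * (1 - X) ^ a) * (X * (1 - X) ^ r) ^ n := by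
    have h1 : (X : ℤ⟦X⟧) ∣ X * (1 - X) ^ a := dvd_mul_right _ _
    have h2 : (X : ℤ⟦X⟧) ^ n ∣ (X * (1 - X) ^ r) ^ n :=
      pow_dvd_pow_of_dvd (dvd_mul_right _ _) n
    simpa [pow_succ'] using mul_dvd_mul h1 h2
  exact PowerSeries.X_pow_dvd_iff.mp hdvd j (by omega)

lemma trunc (r a : ℕ) (c : ℕ → ℤ) {j M : ℕ} (h : j ≤ M) :
    coeff (R := ℤ) j ((X * (1 - X) ^ a) * ∑ n ∈ range (M + 1), c n • (X * (1 - X) ^ r) ^ n) =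
      coeff (R := ℤ) j ((X * (1 - X) ^ a) * ∑ n ∈ range (j + 1), c n • (X * (1 - X) ^ r) ^ n) := by
  rw [Finset.mul_sum, Finset.mul_sum, map_sum, map_sum]
  symm
  apply Finset.sum_subset
  · exact Finset.range_subset_range.mpr (by omega)
  · intro n hn hn'
    rw [Finset.mem_range] at hn
    rw [Finset.mem_range] at hn'
    rw [mul_smul_comm, map_smul, coeff_A_Zn r a (by omega)]
    simp

lemma coeff_mul_congr {A B B' : ℤ⟦X⟧} {M : ℕ} (hA : constantCoeff (R := ℤ) A = 0)
    (h : ∀ j ≤ M, coeff (R := ℤ) j B = coeff (R := ℤ) j B') :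
    coeff (R := ℤ) (M + 1) (A * B) = coeff (R := ℤ) (M + 1) (A * B') := by
  rw [PowerSeries.coeff_mul, PowerSeries.coeff_mul]
  apply Finset.sum_congr rfl
  intro p hp
  rw [Finset.HasAntidiagonal.mem_antidiagonal] at hp
  rcases Nat.eq_zero_or_pos p.1 with h0 | h0
  · rw [h0]
    simp [hA]
  · rw [h p.2 (by omega)]

lemma geom_ps (t : ℕ) :
    ∑ i ∈ range (t + 1), (X : ℤ⟦X⟧) * (1 - X) ^ i = 1 - (1 - X : ℤ⟦X⟧) ^ (t + 1) := by
  have h := geom_sum_mul (1 - X : ℤ⟦X⟧) (t + 1)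
  have h2 : ∑ i ∈ range (t + 1), (X : ℤ⟦X⟧) * (1 - X) ^ i
      = X * ∑ i ∈ range (t + 1), (1 - X : ℤ⟦X⟧) ^ i := by rw [Finset.mul_sum]
  rw [h2]
  linear_combination -h












lemma main_ind (r : ℕ) : ∀ N t : ℕ,
    coeff (R := ℤ) N (1 - (1 - X) ^ (t + 1)) =
      coeff (R := ℤ) N ((X * (1 - X) ^ (r + t + 1)) *
        ∑ n ∈ range (N + 1),
          (barrierSeqCount (fun j => r * j + t) n : ℤ) • (X * (1 - X) ^ r) ^ n) := by
  intro N
  induction N using Nat.strong_induction_on with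
  | _ N IH =>
    intro t
    match N, IH with
    | 0, _ =>
      simp [coeff_zero_eq_constantCoeff]
    | M + 1, IH =>
      set Z : ℤ⟦X⟧ := X * (1 - X) ^ r with hZ
      have e1 : (∑ n ∈ range (M + 2), (barrierSeqCount (fun j => r * j + t) n : ℤ) • Z ^ n)
          = ((t + 1 : ℕ) : ℤ) • (1 : ℤ⟦X⟧) +
            ∑ i ∈ range (t + 1), Z * ∑ n ∈ range (M + 1),
              (barrierSeqCount (fun j => r * j + (r + t - i)) n : ℤ) • Z ^ n := by
        rw [Finset.sum_range_succ', add_comm]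
        congr 1
        · rw [f_zero, pow_zero]
        · calc ∑ n ∈ range (M + 1), (barrierSeqCount (fun j => r * j + t) (n + 1) : ℤ) • Z ^ (n + 1)
              = ∑ n ∈ range (M + 1), ∑ i ∈ range (t + 1),
                  (barrierSeqCount (fun j => r * j + (r + t - i)) n : ℤ) • Z ^ (n + 1) := by
                apply Finset.sum_congr rfl
                intro n _
                rw [f_succ]
                push_cast
                rw [Finset.sum_smul]
            _ = ∑ i ∈ range (t + 1), ∑ n ∈ range (M + 1),
                  (barrierSeqCount (fun j => r * j + (r + t - i)) n : ℤ) • Z ^ (n + 1) :=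
                Finset.sum_comm
            _ = _ := by
                apply Finset.sum_congr rfl
                intro i _
                rw [Finset.mul_sum]
                apply Finset.sum_congr rfl
                intro n _
                rw [mul_smul_comm, ← pow_succ']
      have e2 : (X * (1 - X) ^ (r + t + 1)) *
            (∑ n ∈ range (M + 2), (barrierSeqCount (fun j => r * j + t) n : ℤ) • Z ^ n)
          = ((t + 1 : ℕ) : ℤ) • (X * (1 - X) ^ (r + t + 1)) +
            ∑ i ∈ range (t + 1), (X * (1 - X) ^ i) * ((X * (1 - X) ^ (r + (r + t - i) + 1)) *
              ∑ n ∈ range (M + 1),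
                (barrierSeqCount (fun j => r * j + (r + t - i)) n : ℤ) • Z ^ n) := by
        rw [e1, mul_add, mul_smul_comm, mul_one, Finset.mul_sum]
        congr 1
        apply Finset.sum_congr rfl
        intro i hi
        rw [Finset.mem_range] at hi
        have h1 : ((1 - X : ℤ⟦X⟧)) ^ (r + t + 1) * (1 - X) ^ r
            = (1 - X) ^ i * (1 - X) ^ (r + (r + t - i) + 1) := by
          rw [← pow_add, ← pow_add]
          congr 1
          omega
        have key : (X * (1 - X) ^ (r + t + 1)) * Z
            = (X * (1 - X) ^ i) * (X * (1 - X) ^ (r + (r + t - i) + 1)) := by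
          calc (X * (1 - X) ^ (r + t + 1)) * Z
              = X * X * ((1 - X) ^ (r + t + 1) * (1 - X) ^ r) := by rw [hZ]; ring
            _ = X * X * ((1 - X) ^ i * (1 - X) ^ (r + (r + t - i) + 1)) := by rw [h1]
            _ = _ := by ring
        rw [← mul_assoc, key, mul_assoc]
      have e3 : ∀ i ∈ range (t + 1),
          coeff (R := ℤ) (M + 1) ((X * (1 - X) ^ i) * ((X * (1 - X) ^ (r + (r + t - i) + 1)) *
            ∑ n ∈ range (M + 1),
              (barrierSeqCount (fun j => r * j + (r + t - i)) n : ℤ) • Z ^ n))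
          = coeff (R := ℤ) (M + 1) ((X * (1 - X) ^ i) * (1 - (1 - X) ^ ((r + t - i) + 1))) := by
        intro i hi
        symm
        apply coeff_mul_congr
        · simp
        · intro j hj
          rw [trunc r _ _ hj]
          exact IH j (by omega) (r + t - i)
      have e4 : ((t + 1 : ℕ) : ℤ) • ((X : ℤ⟦X⟧) * (1 - X) ^ (r + t + 1)) +
            ∑ i ∈ range (t + 1), (X * (1 - X) ^ i) * (1 - (1 - X) ^ ((r + t - i) + 1))
          = 1 - (1 - X : ℤ⟦X⟧) ^ (t + 1) := by
        have h5 : ∀ i ∈ range (t + 1),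
            ((X : ℤ⟦X⟧) * (1 - X) ^ i) * (1 - (1 - X) ^ ((r + t - i) + 1))
            = X * (1 - X) ^ i - X * (1 - X) ^ (r + t + 1) := by
          intro i hi
          rw [Finset.mem_range] at hi
          rw [mul_sub, mul_one]
          congr 1
          calc (X : ℤ⟦X⟧) * (1 - X) ^ i * (1 - X) ^ ((r + t - i) + 1)
              = X * ((1 - X) ^ i * (1 - X) ^ ((r + t - i) + 1)) := by ring
            _ = X * (1 - X) ^ (i + ((r + t - i) + 1)) := by rw [← pow_add]
            _ = X * (1 - X) ^ (r + t + 1) := by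
                rw [show i + ((r + t - i) + 1) = r + t + 1 from by omega]
        rw [Finset.sum_congr rfl h5, Finset.sum_sub_distrib, geom_ps, Finset.sum_const,
          Finset.card_range, zsmul_eq_mul, nsmul_eq_mul]
        push_cast
        ring
      rw [e2, map_add, map_sum, Finset.sum_congr rfl e3, ← map_sum, ← map_add, e4]

open PowerSeries in
/-- With `F(x) = ∑ f(n) xⁿ` for the linear barrier `b j = r j + s`, the identity
`1 - (1-x)^{s+1} = x (1-x)^{r+s+1} F(x(1-x)^r)` holds coefficientwise; since the inner
series `x(1-x)^r` has zero constant term, the coefficient of `x^N` of the composition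
`F(x(1-x)^r)` only involves the terms `f(n) (x(1-x)^r)^n` with `n ≤ N`. -/
theorem stmt_9 (r s : ℕ) :
    ∀ N : ℕ,
      coeff (R := ℤ) N (1 - (1 - X) ^ (s + 1)) =
        coeff (R := ℤ) N
          (X * (1 - X) ^ (r + s + 1) *
            ∑ n ∈ Finset.range (N + 1),
              (barrierSeqCount (fun j => r * j + s) n : ℤ) • (X * (1 - X) ^ r) ^ n) := by
  intro N
  exact main_ind r N s
end
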